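/- Let Φ be an n×n matrix with nonnegative off-diagonal entries, diagonal entries −1, and zero column sums, and let S, S* ∈ ℝ^n be strictly positive vectors with (σ▷Φ)S* = 0 for strictly positive σ ∈ ℝ^n. Then ⟨(σ▷Φ)S, diag(S)⁻¹S*⟩ ≥ 0, i.e., Σ_{i,j} σ_jΦ_{ij}S_j · (S*_i/S_i) ≥ 0. -/

import Mathlib

/-- Column-wise scaling of a matrix `Φ` by a vector `σ`. -/
def colScale {n : ℕ} (σ : Fin n → ℝ) (Φ : Matrix (Fin n) (Fin n) ℝ) :
    Matrix (Fin n) (Fin n) ℝ :=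
  Matrix.of fun i j => σ j * Φ i j

/-- Graph-Laplacian Lyapunov inequality: if `S, S*` are positive and `(σ▷Φ)S* = 0`,
then `⟨(σ▷Φ)S, diag(S)⁻¹ S*⟩ ≥ 0`. -/
theorem laplacian_lyapunov_inequality {n : ℕ}
    (Φ : Matrix (Fin n) (Fin n) ℝ) (σ S Sstar : Fin n → ℝ)
    (hoff : ∀ i j, i ≠ j → 0 ≤ Φ i j)
    (hdiag : ∀ i, Φ i i = -1)
    (hcol : ∀ j, ∑ i, Φ i j = 0)
    (hσ : ∀ i, 0 < σ i)
    (hS : ∀ i, 0 < S i) (hSstar : ∀ i, 0 < Sstar i)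
    (heq : (colScale σ Φ).mulVec Sstar = 0) :
    0 ≤ ∑ i, ((colScale σ Φ).mulVec S) i * (Sstar i / S i) := by
  set g : Fin n → ℝ := fun k => Real.log (S k / Sstar k) with hg
  have heq' : ∀ i, ∑ j, (σ j * Φ i j) * Sstar j = 0 := by
    intro i
    have := congrFun heq i
    simpa [Matrix.mulVec, dotProduct, colScale] using this
  have hA : ∑ i, ∑ j, (σ j * Φ i j) * (Sstar j * (1 + g j)) = 0 := by
    rw [Finset.sum_comm]
    refine Finset.sum_eq_zero fun j _ => ?_
    calc ∑ i, (σ j * Φ i j) * (Sstar j * (1 + g j))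
        = ∑ i, (σ j * (Sstar j * (1 + g j))) * Φ i j := by
          apply Finset.sum_congr rfl; intros; ring
      _ = (σ j * (Sstar j * (1 + g j))) * ∑ i, Φ i j := by rw [Finset.mul_sum]
      _ = 0 := by rw [hcol]; ring
  have hB : ∑ i, ∑ j, (σ j * Φ i j) * (Sstar j * g i) = 0 := by
    refine Finset.sum_eq_zero fun i _ => ?_
    calc ∑ j, (σ j * Φ i j) * (Sstar j * g i)
        = g i * ∑ j, (σ j * Φ i j) * Sstar j := by
          rw [Finset.mul_sum]; apply Finset.sum_congr rfl; intros; ring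
      _ = 0 := by rw [heq' i]; ring
  have hzero : ∑ i, ∑ j, (σ j * Φ i j) * (Sstar j * (1 + g j - g i)) = 0 := by
    have : ∀ i j, (σ j * Φ i j) * (Sstar j * (1 + g j - g i))
        = (σ j * Φ i j) * (Sstar j * (1 + g j)) - (σ j * Φ i j) * (Sstar j * g i) :=
      fun i j => by ring
    simp only [this, Finset.sum_sub_distrib, hA, hB, sub_zero]
  have key : ∀ i j, (σ j * Φ i j) * (Sstar j * (1 + g j - g i))
      ≤ (σ j * Φ i j) * (S j * (Sstar i / S i)) := by
    intro i j
    rcases eq_or_ne i j with rfl | hij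
    · have h1 : S i * (Sstar i / S i) = Sstar i * (1 + g i - g i) := by
        field_simp
        rw [add_sub_cancel_right, mul_one]
        exact mul_div_cancel_left₀ _ (hS i).ne'
      rw [h1]
    · have hc : 0 ≤ σ j * Φ i j := mul_nonneg (hσ j).le (hoff i j hij)
      refine mul_le_mul_of_nonneg_left ?_ hc
      set t : ℝ := S j * Sstar i / (S i * Sstar j) with ht
      have htpos : 0 < t := by
        apply div_pos (mul_pos (hS j) (hSstar i)) (mul_pos (hS i) (hSstar j))
      have hlog : g j - g i = Real.log t := by
        have h1 : t = (S j / Sstar j) / (S i / Sstar i) := by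
          field_simp [ht]; ring
        rw [hg, h1, Real.log_div (div_pos (hS j) (hSstar j)).ne'
          (div_pos (hS i) (hSstar i)).ne']
      have hlt : Real.log t ≤ t - 1 := Real.log_le_sub_one_of_pos htpos
      have h2 : Sstar j * t = S j * (Sstar i / S i) := by
        rw [ht]
        field_simp [(hSstar j).ne', (hS i).ne']
      calc Sstar j * (1 + g j - g i) = Sstar j * (1 + Real.log t) := by rw [add_sub_assoc, hlog]
        _ ≤ Sstar j * t := by
            apply mul_le_mul_of_nonneg_left _ (hSstar j).le
            linarith
        _ = S j * (Sstar i / S i) := h2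
  calc (0 : ℝ) = ∑ i, ∑ j, (σ j * Φ i j) * (Sstar j * (1 + g j - g i)) := hzero.symm
    _ ≤ ∑ i, ∑ j, (σ j * Φ i j) * (S j * (Sstar i / S i)) := by
        apply Finset.sum_le_sum; intro i _
        apply Finset.sum_le_sum; intro j _
        exact key i j
    _ = ∑ i, ((colScale σ Φ).mulVec S) i * (Sstar i / S i) := by
        apply Finset.sum_congr rfl; intro i _
        rw [Matrix.mulVec, dotProduct, Finset.sum_mul]
        apply Finset.sum_congr rfl; intro j _
        simp [colScale]; ring
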